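/- Let q be an odd prime power. If A and B are invertible symmetric 2×2 matrices over 𝔽_q with det A = det B, then there exists g ∈ SL₂(𝔽_q) with ᵗg·A·g = B. -/

import Mathlib

open Matrix Polynomial
lemma rep_one (F : Type*) [Field F] [Fintype F] (hcard : Fintype.card F % 2 = 1)
    (a b c : F) (h : a * c - b * b ≠ 0) :
    ∃ x y : F, a * x ^ 2 + 2 * b * x * y + c * y ^ 2 = 1 := by
  have h2 : (2 : F) ≠ 0 := by
    have : ringChar F ≠ 2 := fun hc => by
      have := FiniteField.even_card_iff_char_two.mp hc
      omega
    exact Ring.two_ne_zero this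
  by_cases ha : a = 0
  · have hb : b ≠ 0 := by
      intro hb; apply h; rw [ha, hb]; ring
    refine ⟨(1 - c) / (2 * b), 1, ?_⟩
    field_simp [ha]
    rw [ha]; ring
  · have hdne : (a * c - b * b) / a ≠ 0 := div_ne_zero h ha
    have hf2 : (C a * X ^ 2 : F[X]).degree = 2 := by
      rw [degree_C_mul_X_pow 2 ha]; rfl
    have hg2 : (C ((a * c - b * b) / a) * X ^ 2 - C 1 : F[X]).degree = 2 := by
      rw [sub_eq_add_neg, ← map_neg]
      compute_degree!
    obtain ⟨u, w, huw⟩ := FiniteField.exists_root_sum_quadratic hf2 hg2 hcard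
    refine ⟨u - (b / a) * w, w, ?_⟩
    simp only [eval_add, eval_sub, eval_mul, eval_pow, eval_C, eval_X] at huw
    have key : a * u ^ 2 * a + (a * c - b * b) * w ^ 2 = a := by
      field_simp at huw
      linear_combination huw
    field_simp
    linear_combination key

lemma canon (F : Type*) [Field F] [Fintype F] (hcard : Fintype.card F % 2 = 1)
    (a b c : F) (h : IsUnit (a * c - b * b)) :
    ∃ P : Matrix (Fin 2) (Fin 2) F, P.det = 1 ∧
      Pᵀ * !![a, b; b, c] * P = !![1, 0; 0, a * c - b * b] := by
  obtain ⟨x, y, hxy⟩ := rep_one F hcard a b c h.ne_zero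
  refine ⟨!![x, -(b * x + c * y); y, a * x + b * y], ?_, ?_⟩
  · rw [Matrix.det_fin_two_of]
    linear_combination hxy
  · have hPT : (!![x, -(b * x + c * y); y, a * x + b * y] : Matrix (Fin 2) (Fin 2) F)ᵀ
        = !![x, y; -(b * x + c * y), a * x + b * y] := by
      ext i j; fin_cases i <;> fin_cases j <;> rfl
    rw [hPT]
    ext i j
    fin_cases i <;> fin_cases j <;>
      simp [Matrix.mul_apply, Fin.sum_univ_two] <;>
      first
        | linear_combination hxy
        | linear_combination (b * b - a * c) * hxy
        | linear_combination (1 + b * b - a * c) * hxy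
        | linear_combination (a * c - b * b) * hxy
        | ring

lemma canon' (F : Type*) [Field F] [Fintype F] (hcard : Fintype.card F % 2 = 1)
    (A : Matrix (Fin 2) (Fin 2) F) (hsymm : Aᵀ = A) (hunit : IsUnit A.det) :
    ∃ P : Matrix (Fin 2) (Fin 2) F, P.det = 1 ∧
      Pᵀ * A * P = !![1, 0; 0, A.det] := by
  have h10 : A 1 0 = A 0 1 := by
    conv_lhs => rw [← hsymm, Matrix.transpose_apply]
  have hA : A = !![A 0 0, A 0 1; A 0 1, A 1 1] := by
    ext i j
    fin_cases i <;> fin_cases j <;> simp [h10]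
  have hdet : A.det = A 0 0 * A 1 1 - A 0 1 * A 0 1 := by
    rw [Matrix.det_fin_two, h10]
  obtain ⟨P, hP1, hP2⟩ := canon F hcard (A 0 0) (A 0 1) (A 1 1) (by rwa [← hdet])
  refine ⟨P, hP1, ?_⟩
  rw [hdet]
  rw [hA] at hP2 ⊢
  exact hP2

theorem stmt_5 (F : Type*) [Field F] [Fintype F] (hodd : Odd (Fintype.card F))
    (A B : Matrix (Fin 2) (Fin 2) F)
    (hAsymm : Aᵀ = A) (hBsymm : Bᵀ = B)
    (hAunit : IsUnit A.det) (hBunit : IsUnit B.det)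
    (hdet : A.det = B.det) :
    ∃ g : Matrix.SpecialLinearGroup (Fin 2) F,
      (g : Matrix (Fin 2) (Fin 2) F)ᵀ * A * (g : Matrix (Fin 2) (Fin 2) F) = B := by
  have hcard : Fintype.card F % 2 = 1 := Nat.odd_iff.mp hodd
  obtain ⟨P, hP1, hP2⟩ := canon' F hcard A hAsymm hAunit
  obtain ⟨Q, hQ1, hQ2⟩ := canon' F hcard B hBsymm hBunit
  have hQu : IsUnit Q.det := by rw [hQ1]; exact isUnit_one
  have hQQ : Q * Q⁻¹ = 1 := Matrix.mul_nonsing_inv Q hQu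
  have hgdet : (P * Q⁻¹).det = 1 := by
    rw [Matrix.det_mul, hP1, Matrix.det_nonsing_inv, hQ1, one_mul]
    simp
  refine ⟨⟨P * Q⁻¹, hgdet⟩, ?_⟩
  show (P * Q⁻¹)ᵀ * A * (P * Q⁻¹) = B
  have key : Pᵀ * A * P = Qᵀ * B * Q := by rw [hP2, hQ2, hdet]
  have hT : (Q⁻¹)ᵀ * Qᵀ = 1 := by rw [← Matrix.transpose_mul, hQQ, Matrix.transpose_one]
  calc (P * Q⁻¹)ᵀ * A * (P * Q⁻¹)
      = (Q⁻¹)ᵀ * (Pᵀ * A * P) * Q⁻¹ := by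
        rw [Matrix.transpose_mul]
        noncomm_ring
    _ = (Q⁻¹)ᵀ * (Qᵀ * B * Q) * Q⁻¹ := by rw [key]
    _ = ((Q⁻¹)ᵀ * Qᵀ) * B * (Q * Q⁻¹) := by noncomm_ring
    _ = B := by rw [hT, hQQ, one_mul, mul_one]
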